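/- Combining the reduction with the counting bound: let Σ be a finite state set, and suppose for every n-subset S of a u-element universe we have a pair (M₁(S), M₂(S)) ∈ Σ × Σ and yes-sets Y : Σ → Set U such that (Y(M₁(S)) \ Y(M₂(S))) ⊆ S and |S \ (Y(M₁(S)) \ Y(M₂(S)))| ≤ k with k < u/2. Then 2·log₂|Σ| ≥ log₂ C(u,n) − log₂ C(u,k) − log₂(k+1). -/

import Mathlib

lemma choose_mono_of_lt_half {u k : ℕ} (hk : 2 * k < u) :
    ∀ j ≤ k, u.choose j ≤ u.choose k := by
  induction k with
  | zero => intro j hj; simp [Nat.le_zero.mp hj]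
  | succ m ih =>
    intro j hj
    rcases Nat.lt_or_ge j (m + 1) with h | h
    · have hjm : j ≤ m := Nat.lt_succ_iff.mp h
      have h1 := ih (by omega) j hjm
      exact h1.trans (Nat.choose_le_succ_of_lt_half_left (by omega))
    · have : j = m + 1 := le_antisymm hj h
      subst this; exact le_refl _

/-- Main deterministic lower bound: if for every n-subset S a pair of states
(M₁ S, M₂ S) ∈ Σ × Σ with yes-sets Y satisfies Y(M₁S) \ Y(M₂S) ⊆ S and
|S \ (Y(M₁S) \ Y(M₂S))| ≤ k with k < u/2, then
2·log₂|Σ| ≥ log₂ C(u,n) − log₂ C(u,k) − log₂(k+1). -/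
theorem stmt10 {α σ : Type*} [Fintype α] [Fintype σ] (u n k : ℕ)
    (hu : Fintype.card α = u) (hnu : n ≤ u) (hk2 : (k : ℝ) < (u : ℝ) / 2)
    (M₁ M₂ : Finset α → σ) (Y : σ → Set α)
    (h1 : ∀ S : Finset α, S.card = n → Y (M₁ S) \ Y (M₂ S) ⊆ ↑S)
    (h2 : ∀ S : Finset α, S.card = n →
      ((↑S : Set α) \ (Y (M₁ S) \ Y (M₂ S))).ncard ≤ k) :
    Real.logb 2 (u.choose n) - Real.logb 2 (u.choose k) - Real.logb 2 (k + 1) ≤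
      2 * Real.logb 2 (Fintype.card σ) := by
  classical
  have h2k : 2 * k < u := by
    have : (2 * k : ℝ) < u := by linarith
    exact_mod_cast this
  have hku : k ≤ u := by omega
  -- σ is nonempty
  obtain ⟨S₀, -, hS₀⟩ := Finset.exists_subset_card_eq
    (s := (Finset.univ : Finset α)) (n := n) (by rw [Finset.card_univ, hu]; exact hnu)
  have hσ : 1 ≤ Fintype.card σ := Fintype.card_pos_iff.mpr ⟨M₁ S₀⟩
  -- the "difference" finset
  set D : Finset α → Finset α :=
    fun S => S.filter (fun a => a ∈ Y (M₁ S) \ Y (M₂ S)) with hD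
  have hDcoe : ∀ S : Finset α, S.card = n →
      (↑(D S) : Set α) = Y (M₁ S) \ Y (M₂ S) := by
    intro S hS
    ext a
    simp only [hD, Finset.coe_filter, Set.mem_setOf_eq, Set.mem_diff]
    constructor
    · rintro ⟨-, h⟩; exact h
    · intro h; exact ⟨h1 S hS h, h⟩
  have hDsub : ∀ S : Finset α, D S ⊆ S := fun S => Finset.filter_subset _ _
  -- the small sets target
  set B : Finset (Finset α) :=
    (Finset.range (k + 1)).biUnion (fun j => (Finset.univ : Finset α).powersetCard j) with hB
  have hBcard : B.card ≤ (k + 1) * u.choose k := by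
    rw [hB, Finset.card_biUnion]
    · calc ∑ j ∈ Finset.range (k + 1), ((Finset.univ : Finset α).powersetCard j).card
          ≤ ∑ _j ∈ Finset.range (k + 1), u.choose k := by
            apply Finset.sum_le_sum
            intro j hj
            rw [Finset.card_powersetCard, Finset.card_univ, hu]
            exact choose_mono_of_lt_half h2k j (by simpa [Nat.lt_succ_iff] using hj)
        _ = (k + 1) * u.choose k := by simp [Finset.sum_const, Finset.card_range]
    · intro x hx y hy hxy
      apply Finset.disjoint_left.mpr
      intro s hs hs'
      rw [Finset.mem_powersetCard] at hs hs'
      exact hxy (hs.2 ▸ hs'.2)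
  -- injection from n-subsets to σ × σ × B
  have hmain : u.choose n ≤ Fintype.card σ * (Fintype.card σ * ((k + 1) * u.choose k)) := by
    have hinj : ((Finset.univ : Finset α).powersetCard n).card ≤
        ((Finset.univ : Finset σ) ×ˢ (Finset.univ : Finset σ) ×ˢ B).card := by
      apply Finset.card_le_card_of_injOn (fun S => (M₁ S, M₂ S, S \ D S))
      · intro S hS
        rw [Finset.mem_coe, Finset.mem_powersetCard] at hS
        simp only [Finset.mem_coe, Finset.mem_product, Finset.mem_univ, true_and]
        rw [hB, Finset.mem_biUnion]
        refine ⟨(S \ D S).card, ?_, ?_⟩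
        · rw [Finset.mem_range, Nat.lt_succ_iff]
          have := h2 S hS.2
          rwa [← hDcoe S hS.2, ← Finset.coe_sdiff, Set.ncard_coe_finset] at this
        · rw [Finset.mem_powersetCard]
          exact ⟨Finset.subset_univ _, rfl⟩
      · intro S hS T hT hST
        rw [Finset.mem_coe, Finset.mem_powersetCard] at hS hT
        simp only [Prod.mk.injEq] at hST
        obtain ⟨e1, e2, e3⟩ := hST
        have hDeq : D S = D T := by
          apply Finset.coe_injective
          rw [hDcoe S hS.2, hDcoe T hT.2, e1, e2]
        have h4 : S = D S ∪ (S \ D S) := (Finset.union_sdiff_of_subset (hDsub S)).symm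
        have h5 : T = D T ∪ (T \ D T) := (Finset.union_sdiff_of_subset (hDsub T)).symm
        rw [h4, h5, e3, hDeq]
    rw [Finset.card_powersetCard, Finset.card_univ, hu] at hinj
    rw [Finset.card_product, Finset.card_product, Finset.card_univ] at hinj
    calc u.choose n ≤ Fintype.card σ * (Fintype.card σ * B.card) := hinj
      _ ≤ Fintype.card σ * (Fintype.card σ * ((k + 1) * u.choose k)) := by
          exact Nat.mul_le_mul_left _ (Nat.mul_le_mul_left _ hBcard)
  -- take logs
  have hcn : (0 : ℝ) < u.choose n := by exact_mod_cast Nat.choose_pos hnu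
  have hck : (0 : ℝ) < u.choose k := by exact_mod_cast Nat.choose_pos hku
  have hk1 : (0 : ℝ) < (k : ℝ) + 1 := by positivity
  have hσR : (0 : ℝ) < Fintype.card σ := by exact_mod_cast hσ
  have hle : (u.choose n : ℝ) ≤
      (Fintype.card σ : ℝ) * ((Fintype.card σ : ℝ) * (((k : ℝ) + 1) * (u.choose k : ℝ))) := by
    exact_mod_cast hmain
  have hlog : Real.logb 2 (u.choose n) ≤
      Real.logb 2 ((Fintype.card σ : ℝ) * ((Fintype.card σ : ℝ) * (((k : ℝ) + 1) * (u.choose k : ℝ)))) := by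
    exact Real.logb_le_logb_of_le (by norm_num) hcn hle
  rw [Real.logb_mul (ne_of_gt hσR) (by positivity),
      Real.logb_mul (ne_of_gt hσR) (by positivity),
      Real.logb_mul (ne_of_gt hk1) (ne_of_gt hck)] at hlog
  linarith
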